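/- If X₁, X₂ are i.i.d. St. Petersburg random variables, then lim_{ℓ→∞} P{X₁ + X₂ > 2^ℓ}/P{X₁ > 2^ℓ} = 4 and lim_{ℓ→∞} P{X₁ + X₂ > 2^ℓ - 1}/P{X₁ > 2^ℓ - 1} = 2. -/

import Mathlib

open MeasureTheory ProbabilityTheory Filter Topology
open scoped ENNReal

set_option linter.unusedSectionVars false

section Aux
variable {Ω : Type*} [MeasurableSpace Ω] (μ : Measure Ω) [IsProbabilityMeasure μ]
variable (X : Ω → ℝ)

private def goodSet : Set Ω := ⋃ n : ℕ, {ω | X ω = 2 ^ (1 + n)}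

private lemma goodSet_meas (hm : Measurable X) : MeasurableSet (goodSet X) :=
  MeasurableSet.iUnion fun n => hm (measurableSet_singleton _)

private lemma mem_goodSet {ω : Ω} (h : ω ∈ goodSet X) : ∃ a : ℕ, 1 ≤ a ∧ X ω = 2 ^ a := by
  simp only [goodSet, Set.mem_iUnion, Set.mem_setOf_eq] at h
  obtain ⟨n, hn⟩ := h
  exact ⟨1 + n, by omega, hn⟩

variable (hm : Measurable X)
    (hd : ∀ k : ℕ, 1 ≤ k → μ {ω | X ω = 2 ^ k} = ((2 : ℝ≥0∞) ^ k)⁻¹)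

private lemma pow2_injective : Function.Injective fun n : ℕ => (2:ℝ) ^ n :=
  (strictMono_nat_of_lt_succ fun n => by
    simpa using pow_lt_pow_right₀ (M₀ := ℝ) one_lt_two (Nat.lt_succ_self n)).injective

include hm hd

private lemma union_meas (m : ℕ) (hm1 : 1 ≤ m) :
    μ (⋃ n : ℕ, {ω | X ω = 2 ^ (m + n)}) = 2 * ((2 : ℝ≥0∞) ^ m)⁻¹ := by
  have hdisj : Pairwise (Function.onFun Disjoint (fun n => {ω | X ω = 2 ^ (m + n)})) := by
    intro i j hij
    simp only [Function.onFun, Set.disjoint_left]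
    intro ω h1 h2
    simp only [Set.mem_setOf_eq] at h1 h2
    exact hij (Nat.add_left_cancel (pow2_injective (h1 ▸ h2)))
  have hmeas : ∀ n : ℕ, MeasurableSet {ω | X ω = 2 ^ (m + n)} :=
    fun n => hm (measurableSet_singleton ((2:ℝ)^(m+n)))
  rw [measure_iUnion hdisj hmeas]
  have h1 : ∀ n : ℕ, μ {ω | X ω = 2 ^ (m + n)} = ((2:ℝ≥0∞) ^ m)⁻¹ * ((2:ℝ≥0∞)^n)⁻¹ := by
    intro n
    rw [hd (m + n) (le_trans hm1 (Nat.le_add_right _ _)), pow_add,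
      ENNReal.mul_inv (by simp) (by simp)]
  simp_rw [h1]
  rw [ENNReal.tsum_mul_left]
  have h3 : ∑' n:ℕ, ((2:ℝ≥0∞)^n)⁻¹ = 2 := by
    have h2 : ∀ n:ℕ, ((2:ℝ≥0∞)^n)⁻¹ = (2⁻¹:ℝ≥0∞)^n := by intro n; rw [ENNReal.inv_pow]
    simp_rw [h2, ENNReal.tsum_geometric, ENNReal.one_sub_inv_two, inv_inv]
  rw [h3, mul_comm]

private lemma good_compl_null : μ (goodSet X)ᶜ = 0 := by
  have h1 : μ (goodSet X) = 1 := by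
    have := union_meas μ X hm hd 1 le_rfl
    simpa [goodSet, pow_one, ENNReal.mul_inv_cancel] using this
  rw [measure_compl (goodSet_meas X hm) (measure_ne_top μ _), h1, measure_univ, tsub_self]

omit hm hd

private lemma meas_inter_conull {S : Set Ω} (hS : μ Sᶜ = 0) (T : Set Ω) :
    μ T = μ (T ∩ S) := by
  refine le_antisymm ?_ (measure_mono Set.inter_subset_left)
  calc μ T = μ ((T ∩ S) ∪ (T ∩ Sᶜ)) := by rw [Set.inter_union_compl]
    _ ≤ μ (T ∩ S) + μ (T ∩ Sᶜ) := measure_union_le _ _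
    _ ≤ μ (T ∩ S) + μ Sᶜ := add_le_add (le_refl _) (measure_mono Set.inter_subset_right)
    _ = μ (T ∩ S) := by rw [hS, add_zero]

include hm hd

private lemma tail_meas (m : ℕ) (hm1 : 1 ≤ m) :
    μ {ω | (2:ℝ)^m ≤ X ω} = 2 * ((2 : ℝ≥0∞) ^ m)⁻¹ := by
  rw [meas_inter_conull μ (good_compl_null μ X hm hd)]
  have hset : {ω | (2:ℝ)^m ≤ X ω} ∩ goodSet X = ⋃ n : ℕ, {ω | X ω = 2 ^ (m + n)} := by
    ext ω
    simp only [goodSet, Set.mem_inter_iff, Set.mem_setOf_eq, Set.mem_iUnion]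
    constructor
    · rintro ⟨hle, n, hn⟩
      have hmn : m ≤ 1 + n := by
        by_contra hc
        push_neg at hc
        have h4 := pow_lt_pow_right₀ (M₀ := ℝ) one_lt_two hc
        rw [hn] at hle
        linarith
      exact ⟨1 + n - m, by rw [hn]; congr 1; omega⟩
    · rintro ⟨n, hn⟩
      refine ⟨by rw [hn]; exact pow_le_pow_right₀ one_le_two (Nat.le_add_right _ _), m + n - 1, ?_⟩
      rw [hn]; congr 1; omega
  rw [hset]
  exact union_meas μ X hm hd m hm1

end Aux

/-- For i.i.d. St. Petersburg random variables `X₁, X₂`: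
`lim_{ℓ→∞} P{X₁+X₂ > 2^ℓ}/P{X₁ > 2^ℓ} = 4` and
`lim_{ℓ→∞} P{X₁+X₂ > 2^ℓ - 1}/P{X₁ > 2^ℓ - 1} = 2`. -/
theorem stmt_3 {Ω : Type*} [MeasurableSpace Ω] (μ : Measure Ω) [IsProbabilityMeasure μ]
    (X₁ X₂ : Ω → ℝ) (hm₁ : Measurable X₁) (hm₂ : Measurable X₂)
    (hindep : IndepFun X₁ X₂ μ)
    (hd₁ : ∀ k : ℕ, 1 ≤ k → μ {ω | X₁ ω = 2 ^ k} = ((2 : ℝ≥0∞) ^ k)⁻¹)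
    (hd₂ : ∀ k : ℕ, 1 ≤ k → μ {ω | X₂ ω = 2 ^ k} = ((2 : ℝ≥0∞) ^ k)⁻¹) :
    Tendsto (fun l : ℕ =>
        (μ {ω | (2 : ℝ) ^ l < X₁ ω + X₂ ω}).toReal /
          (μ {ω | (2 : ℝ) ^ l < X₁ ω}).toReal) atTop (𝓝 4) ∧
    Tendsto (fun l : ℕ =>
        (μ {ω | (2 : ℝ) ^ l - 1 < X₁ ω + X₂ ω}).toReal /
          (μ {ω | (2 : ℝ) ^ l - 1 < X₁ ω}).toReal) atTop (𝓝 2) := by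
  classical
  -- the conull good set
  set G : Set Ω := goodSet X₁ ∩ goodSet X₂ with hG
  have hGnull : μ Gᶜ = 0 := by
    have h1 := good_compl_null μ X₁ hm₁ hd₁
    have h2 := good_compl_null μ X₂ hm₂ hd₂
    have : μ Gᶜ ≤ μ (goodSet X₁)ᶜ + μ (goodSet X₂)ᶜ := by
      rw [hG, Set.compl_inter]
      exact measure_union_le _ _
    simpa [h1, h2] using this
  -- key exact formulas for each l ≥ 2
  have key : ∀ l : ℕ, 2 ≤ l →
      ((μ {ω | (2 : ℝ) ^ l < X₁ ω + X₂ ω}).toReal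
          = 4 * ((2:ℝ)^l)⁻¹ - 4 * (((2:ℝ)^l)⁻¹)^2) ∧
      (μ {ω | (2 : ℝ) ^ l < X₁ ω}).toReal = ((2:ℝ)^l)⁻¹ ∧
      (μ {ω | (2 : ℝ) ^ l - 1 < X₁ ω + X₂ ω}).toReal = 4 * ((2:ℝ)^l)⁻¹ ∧
      (μ {ω | (2 : ℝ) ^ l - 1 < X₁ ω}).toReal = 2 * ((2:ℝ)^l)⁻¹ := by
    intro l hl
    set r : ℝ := ((2:ℝ)^l)⁻¹ with hr
    set A : Set Ω := {ω | (2:ℝ)^l ≤ X₁ ω} with hA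
    set B : Set Ω := {ω | (2:ℝ)^l ≤ X₂ ω} with hB
    set C : Set Ω := {ω | X₁ ω = 2^(l-1)} ∩ {ω | X₂ ω = 2^(l-1)} with hC
    have hAm : MeasurableSet A := hm₁ measurableSet_Ici
    have hBm : MeasurableSet B := hm₂ measurableSet_Ici
    have hCm : MeasurableSet C :=
      (hm₁ (measurableSet_singleton _)).inter (hm₂ (measurableSet_singleton _))
    -- real-number facts
    have hl1e : (2:ℝ)^l = 2 * 2^(l-1) := by
      rw [← pow_succ']; congr 1; omega
    have hl2e : (2:ℝ)^(l-1) = 2 * 2^(l-2) := by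
      rw [← pow_succ']; congr 1; omega
    have hl2pos : (1:ℝ) ≤ 2^(l-2) := one_le_pow₀ one_le_two
    have hrpos : 0 < r := by positivity
    -- toReal of basic measures
    have hqA : (μ A).toReal = 2 * r := by
      rw [hA, tail_meas μ X₁ hm₁ hd₁ l (by omega)]
      simp [hr, ENNReal.toReal_mul, ENNReal.toReal_inv]
    have hqB : (μ B).toReal = 2 * r := by
      rw [hB, tail_meas μ X₂ hm₂ hd₂ l (by omega)]
      simp [hr, ENNReal.toReal_mul, ENNReal.toReal_inv]
    have hqAB : (μ (A ∩ B)).toReal = (2*r) * (2*r) := by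
      have hAe : A = X₁ ⁻¹' Set.Ici ((2:ℝ)^l) := rfl
      have hBe : B = X₂ ⁻¹' Set.Ici ((2:ℝ)^l) := rfl
      have := hindep.measure_inter_preimage_eq_mul (Set.Ici ((2:ℝ)^l)) (Set.Ici ((2:ℝ)^l))
        measurableSet_Ici measurableSet_Ici
      rw [hAe, hBe, this, ENNReal.toReal_mul, ← hAe, ← hBe, hqA, hqB]
    have hqC : (μ C).toReal = 4 * r^2 := by
      have hCe : C = X₁ ⁻¹' {(2:ℝ)^(l-1)} ∩ X₂ ⁻¹' {(2:ℝ)^(l-1)} := rfl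
      have hprod := hindep.measure_inter_preimage_eq_mul {(2:ℝ)^(l-1)} {(2:ℝ)^(l-1)}
        (measurableSet_singleton _) (measurableSet_singleton _)
      have h1 : μ (X₁ ⁻¹' {(2:ℝ)^(l-1)}) = ((2:ℝ≥0∞)^(l-1))⁻¹ := hd₁ (l-1) (by omega)
      have h2 : μ (X₂ ⁻¹' {(2:ℝ)^(l-1)}) = ((2:ℝ≥0∞)^(l-1))⁻¹ := hd₂ (l-1) (by omega)
      rw [hCe, hprod, h1, h2]
      have hinv : (((2:ℝ≥0∞)^(l-1))⁻¹).toReal = ((2:ℝ)^(l-1))⁻¹ := by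
        simp [ENNReal.toReal_inv]
      rw [ENNReal.toReal_mul, hinv]
      have : ((2:ℝ)^(l-1))⁻¹ = 2 * r := by
        rw [hr, hl1e]
        field_simp
      rw [this]; ring
    have hqAB' : (μ (A ∪ B)).toReal = 4 * r - 4 * r^2 := by
      have e := measure_union_add_inter (μ := μ) A hBm
      have e' := congrArg ENNReal.toReal e
      rw [ENNReal.toReal_add (measure_ne_top μ _) (measure_ne_top μ _),
        ENNReal.toReal_add (measure_ne_top μ _) (measure_ne_top μ _)] at e'
      rw [hqA, hqB, hqAB] at e'
      nlinarith [e']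
    -- pointwise descriptions
    have hmemG : ∀ ω ∈ G, ∃ a b : ℕ, 1 ≤ a ∧ 1 ≤ b ∧ X₁ ω = 2^a ∧ X₂ ω = 2^b := by
      rintro ω ⟨h1, h2⟩
      obtain ⟨a, ha, ha'⟩ := mem_goodSet X₁ h1
      obtain ⟨b, hb, hb'⟩ := mem_goodSet X₂ h2
      exact ⟨a, b, ha, hb, ha', hb'⟩
    -- numerator 1
    have hN1 : {ω | (2 : ℝ) ^ l < X₁ ω + X₂ ω} ∩ G = (A ∪ B) ∩ G := by
      ext ω
      simp only [Set.mem_inter_iff, Set.mem_setOf_eq, Set.mem_union, hA, hB,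
        and_congr_left_iff]
      intro hGω
      obtain ⟨a, b, ha, hb, ha', hb'⟩ := hmemG ω hGω
      rw [ha', hb']
      constructor
      · intro hlt
        by_contra hc
        push_neg at hc
        obtain ⟨h1, h2⟩ := hc
        have ha2 : a ≤ l - 1 := by
          have := (pow_lt_pow_iff_right₀ (a := (2:ℝ)) one_lt_two).mp h1
          omega
        have hb2 : b ≤ l - 1 := by
          have := (pow_lt_pow_iff_right₀ (a := (2:ℝ)) one_lt_two).mp h2
          omega
        have h3 : (2:ℝ)^a ≤ 2^(l-1) := pow_le_pow_right₀ one_le_two ha2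
        have h4 : (2:ℝ)^b ≤ 2^(l-1) := pow_le_pow_right₀ one_le_two hb2
        linarith [hl1e]
      · intro hor
        have hpa : (0:ℝ) < 2^a := by positivity
        have hpb : (0:ℝ) < 2^b := by positivity
        rcases hor with h | h
        · linarith
        · linarith
    -- numerator 2
    have hN2 : {ω | (2 : ℝ) ^ l - 1 < X₁ ω + X₂ ω} ∩ G = ((A ∪ B) ∪ C) ∩ G := by
      ext ω
      simp only [Set.mem_inter_iff, Set.mem_setOf_eq, Set.mem_union, hA, hB, hC,
        and_congr_left_iff]
      intro hGω
      obtain ⟨a, b, ha, hb, ha', hb'⟩ := hmemG ω hGω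
      rw [ha', hb']
      constructor
      · intro hlt
        by_contra hc
        push_neg at hc
        obtain ⟨⟨h1, h2⟩, h3⟩ := hc
        have ha2 : a ≤ l - 1 := by
          have := (pow_lt_pow_iff_right₀ (a := (2:ℝ)) one_lt_two).mp h1
          omega
        have hb2 : b ≤ l - 1 := by
          have := (pow_lt_pow_iff_right₀ (a := (2:ℝ)) one_lt_two).mp h2
          omega
        have hab : a ≤ l - 2 ∨ b ≤ l - 2 := by
          by_contra hcc
          push_neg at hcc
          have hae : a = l - 1 := by omega
          have hbe : b = l - 1 := by omega
          exact h3 (by rw [hae]) (by rw [hbe])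
        rcases hab with h | h
        · have h5 : (2:ℝ)^a ≤ 2^(l-2) := pow_le_pow_right₀ one_le_two h
          have h6 : (2:ℝ)^b ≤ 2^(l-1) := pow_le_pow_right₀ one_le_two hb2
          linarith [hl1e, hl2e, hl2pos]
        · have h5 : (2:ℝ)^b ≤ 2^(l-2) := pow_le_pow_right₀ one_le_two h
          have h6 : (2:ℝ)^a ≤ 2^(l-1) := pow_le_pow_right₀ one_le_two ha2
          linarith [hl1e, hl2e, hl2pos]
      · intro hor
        have hpa : (0:ℝ) < 2^a := by positivity
        have hpb : (0:ℝ) < 2^b := by positivity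
        rcases hor with (h | h) | ⟨h1, h2⟩
        · linarith
        · linarith
        · rw [h1, h2]; linarith [hl1e, hl2e, hl2pos]
    -- denominator 1
    have hD1 : {ω | (2 : ℝ) ^ l < X₁ ω} ∩ G = {ω | (2:ℝ)^(l+1) ≤ X₁ ω} ∩ G := by
      ext ω
      simp only [Set.mem_inter_iff, Set.mem_setOf_eq, and_congr_left_iff]
      intro hGω
      obtain ⟨a, b, ha, hb, ha', hb'⟩ := hmemG ω hGω
      rw [ha']
      rw [pow_lt_pow_iff_right₀ (a := (2:ℝ)) one_lt_two,
        pow_le_pow_iff_right₀ (a := (2:ℝ)) one_lt_two]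
      omega
    -- denominator 2
    have hD2 : {ω | (2 : ℝ) ^ l - 1 < X₁ ω} ∩ G = A ∩ G := by
      ext ω
      simp only [Set.mem_inter_iff, Set.mem_setOf_eq, hA, and_congr_left_iff]
      intro hGω
      obtain ⟨a, b, ha, hb, ha', hb'⟩ := hmemG ω hGω
      rw [ha']
      constructor
      · intro hlt
        by_contra hc
        have ha2 : a ≤ l - 1 := by
          have := (pow_lt_pow_iff_right₀ (a := (2:ℝ)) one_lt_two).mp (lt_of_not_ge hc)
          omega
        have h3 : (2:ℝ)^a ≤ 2^(l-1) := pow_le_pow_right₀ one_le_two ha2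
        have : (1:ℝ) ≤ 2^(l-1) := one_le_pow₀ one_le_two
        linarith [hl1e]
      · intro h; linarith
    -- measures via G
    have hmeasT : ∀ T U : Set Ω, T ∩ G = U ∩ G → μ T = μ U := by
      intro T U h
      rw [meas_inter_conull μ hGnull T, h, ← meas_inter_conull μ hGnull U]
    refine ⟨?_, ?_, ?_, ?_⟩
    · rw [hmeasT _ _ hN1, hqAB']
    · rw [hmeasT _ _ hD1, tail_meas μ X₁ hm₁ hd₁ (l+1) (by omega)]
      have : ((2:ℝ)^(l+1)) = 2 * 2^l := by rw [pow_succ']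
      simp [ENNReal.toReal_mul, ENNReal.toReal_inv, hr, this]
      field_simp
    · rw [hmeasT _ _ hN2]
      have hdisjC : Disjoint (A ∪ B) C := by
        rw [Set.disjoint_left]
        rintro ω (h | h) ⟨h1, h2⟩
        · rw [hA, Set.mem_setOf_eq, h1] at h
          have : (2:ℝ)^(l-1) < 2^l := pow_lt_pow_right₀ one_lt_two (by omega)
          linarith
        · rw [hB, Set.mem_setOf_eq, h2] at h
          have : (2:ℝ)^(l-1) < 2^l := pow_lt_pow_right₀ one_lt_two (by omega)
          linarith
      rw [measure_union hdisjC hCm, ENNReal.toReal_add (measure_ne_top μ _) (measure_ne_top μ _),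
        hqAB', hqC]
      ring
    · rw [hmeasT _ _ hD2, hqA]
  -- conclude the limits
  constructor
  · have hev : (fun l : ℕ => (4:ℝ) - 4 * ((2:ℝ)^l)⁻¹) =ᶠ[atTop]
        (fun l : ℕ => (μ {ω | (2 : ℝ) ^ l < X₁ ω + X₂ ω}).toReal /
          (μ {ω | (2 : ℝ) ^ l < X₁ ω}).toReal) := by
      filter_upwards [eventually_ge_atTop 2] with l hl
      obtain ⟨h1, h2, _, _⟩ := key l hl
      rw [h1, h2]
      have hrpos : (0:ℝ) < ((2:ℝ)^l)⁻¹ := by positivity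
      field_simp
    refine Tendsto.congr' hev ?_
    have h0 : Tendsto (fun l : ℕ => ((2:ℝ)^l)⁻¹) atTop (𝓝 0) := by
      simp_rw [← inv_pow]
      exact tendsto_pow_atTop_nhds_zero_of_lt_one (by norm_num) (by norm_num)
    have := (tendsto_const_nhds (x := (4:ℝ)) (f := atTop)).sub (h0.const_mul 4)
    simpa using this
  · have hev : (fun _ : ℕ => (2:ℝ)) =ᶠ[atTop]
        (fun l : ℕ => (μ {ω | (2 : ℝ) ^ l - 1 < X₁ ω + X₂ ω}).toReal /
          (μ {ω | (2 : ℝ) ^ l - 1 < X₁ ω}).toReal) := by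
      filter_upwards [eventually_ge_atTop 2] with l hl
      obtain ⟨_, _, h3, h4⟩ := key l hl
      rw [h3, h4]
      have hrpos : (0:ℝ) < ((2:ℝ)^l)⁻¹ := by positivity
      field_simp
      ring
    exact Tendsto.congr' hev tendsto_const_nhds
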